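/- Assume q_n ≥ c > 0 for all n ∈ ℤ₀. Let φ and θ be the solutions of problem (P) with φ₁ = 1, Δφ₁ = −1 and θ₁ = 1, Δθ₁ = 0. Then there exists a complex number v̂ with Re(v̂ e^{−iδ}) > 0 such that the solution ψ_n = φ_n + v̂ θ_n satisfies (cos δ) ∑_{n=2}^{∞} (|Δψ_n|² + q_n |ψ_n|²) ≤ Re(v̂ e^{−iδ}). -/

import Mathlib

/- Problem (P): −Δ²y_{n−1} + q_n y_n = 0 on ℤ₀ = ℤ \ {0,1}, with impulse conditions
   y_{−1} = y₁, Δy_{−1} = e^{2iδ} Δy₁, for a sequence y : ℤ → ℂ. -/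
def IsSolP (δ : ℝ) (q : ℤ → ℝ) (y : ℤ → ℂ) : Prop :=
  (∀ n : ℤ, n ≠ 0 → n ≠ 1 →
    -(y (n + 1) - 2 * y n + y (n - 1)) + (q n : ℂ) * y n = 0) ∧
  y (-1) = y 1 ∧
  y 0 - y (-1) = Complex.exp (2 * (δ : ℂ) * Complex.I) * (y 2 - y 1)

/-- Backward continued-fraction iterates: `Sseq Q k j` is the `k`-step backward iterate of the
ratio map starting from `0`. -/
noncomputable def Sseq (Q : ℕ → ℝ) : ℕ → ℕ → ℝ
  | 0, _ => 0
  | (k+1), j => 1 / (2 + Q j - Sseq Q k (j+1))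

lemma Sseq_bound {Q : ℕ → ℝ} {c : ℝ} (hc : 0 < c) (hQ : ∀ j, c ≤ Q j) :
    ∀ k j, 0 ≤ Sseq Q k j ∧ Sseq Q k j ≤ 1 / (1 + c) := by
  intro k
  induction k with
  | zero =>
    intro j
    refine ⟨le_refl 0, ?_⟩
    positivity
  | succ k ih =>
    intro j
    have h1 := ih (j + 1)
    have hM : 1 / (1 + c) ≤ 1 := by
      rw [div_le_one (by linarith)]; linarith
    have hden : 1 + c ≤ 2 + Q j - Sseq Q k (j + 1) := by
      have := hQ j; linarith [h1.2]
    have hden0 : (0 : ℝ) < 2 + Q j - Sseq Q k (j + 1) := by linarith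
    constructor
    · show 0 ≤ 1 / (2 + Q j - Sseq Q k (j + 1))
      positivity
    · show 1 / (2 + Q j - Sseq Q k (j + 1)) ≤ 1 / (1 + c)
      exact one_div_le_one_div_of_le (by linarith) hden

lemma Sseq_mono {Q : ℕ → ℝ} {c : ℝ} (hc : 0 < c) (hQ : ∀ j, c ≤ Q j) :
    ∀ k j, Sseq Q k j ≤ Sseq Q (k + 1) j := by
  intro k
  induction k with
  | zero =>
    intro j
    have h := Sseq_bound hc hQ 1 j
    simpa [Sseq] using h.1
  | succ k ih =>
    intro j
    show 1 / (2 + Q j - Sseq Q k (j + 1)) ≤ 1 / (2 + Q j - Sseq Q (k + 1) (j + 1))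
    have hb := Sseq_bound hc hQ (k + 1) (j + 1)
    have hM : 1 / (1 + c) ≤ 1 := by
      rw [div_le_one (by linarith)]; linarith
    have hden0 : (0 : ℝ) < 2 + Q j - Sseq Q (k + 1) (j + 1) := by
      have := hQ j; linarith [hb.2]
    exact one_div_le_one_div_of_le hden0 (by linarith [ih (j + 1)])

/-- The decaying solution built from the limiting ratios. -/
noncomputable def pseq (r : ℕ → ℝ) : ℕ → ℝ
  | 0 => 1 / (1 - r 0)
  | (j+1) => r j * pseq r j

/-- The integers `≥ 2` are equivalent to `ℕ`. -/
def eNat : ℕ ≃ {m : ℤ // 2 ≤ m} where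
  toFun := fun j => ⟨(j : ℤ) + 2, by omega⟩
  invFun := fun m => (m.1 - 2).toNat
  left_inv := fun j => by
    show ((((j : ℤ) + 2) - 2).toNat) = j
    omega
  right_inv := fun m => by
    apply Subtype.ext
    have := m.2
    show (((m.1 - 2).toNat : ℤ)) + 2 = m.1
    omega

/-- with φ, θ the solutions of (P) satisfying φ₁ = 1, Δφ₁ = −1 and
θ₁ = 1, Δθ₁ = 0, there is v̂ ∈ ℂ with Re(v̂ e^{−iδ}) > 0 such that ψ = φ + v̂ θ
satisfies (cos δ) ∑_{n=2}^{∞} (|Δψ_n|² + q_n |ψ_n|²) ≤ Re(v̂ e^{−iδ}). -/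
theorem right_weyl_solution (δ : ℝ) (hδ : 0 ≤ δ ∧ δ < Real.pi / 2)
    (q : ℤ → ℝ) (c : ℝ) (hc : 0 < c) (hq : ∀ n : ℤ, n ≠ 0 → n ≠ 1 → c ≤ q n)
    (φ θ : ℤ → ℂ) (hφ : IsSolP δ q φ) (hθ : IsSolP δ q θ)
    (hφ1 : φ 1 = 1) (hφ1' : φ 2 - φ 1 = -1)
    (hθ1 : θ 1 = 1) (hθ1' : θ 2 - θ 1 = 0) :
    ∃ v : ℂ, 0 < (v * Complex.exp (-(δ : ℂ) * Complex.I)).re ∧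
      ∃ ψ : ℤ → ℂ, (∀ n : ℤ, ψ n = φ n + v * θ n) ∧
        Summable (fun n : {m : ℤ // 2 ≤ m} =>
          ‖ψ ((n : ℤ) + 1) - ψ (n : ℤ)‖ ^ 2 + q (n : ℤ) * ‖ψ (n : ℤ)‖ ^ 2) ∧
        Real.cos δ *
            (∑' n : {m : ℤ // 2 ≤ m},
              (‖ψ ((n : ℤ) + 1) - ψ (n : ℤ)‖ ^ 2 + q (n : ℤ) * ‖ψ (n : ℤ)‖ ^ 2)) ≤
          (v * Complex.exp (-(δ : ℂ) * Complex.I)).re := by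
  classical
  set Q : ℕ → ℝ := fun j => q ((j : ℤ) + 2) with hQdef
  have hQ : ∀ j, c ≤ Q j := fun j => hq ((j : ℤ) + 2) (by omega) (by omega)
  -- the ratio sequence
  have hmono : ∀ j, Monotone (fun k => Sseq Q k j) := fun j =>
    monotone_nat_of_le_succ (fun k => Sseq_mono hc hQ k j)
  have hbdd : ∀ j, BddAbove (Set.range fun k => Sseq Q k j) := by
    intro j
    refine ⟨1 / (1 + c), ?_⟩
    rintro x ⟨k, rfl⟩
    exact (Sseq_bound hc hQ k j).2
  set r : ℕ → ℝ := fun j => ⨆ k, Sseq Q k j with hrdef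
  have hrt : ∀ j, Filter.Tendsto (fun k => Sseq Q k j) Filter.atTop (nhds (r j)) :=
    fun j => tendsto_atTop_ciSup (hmono j) (hbdd j)
  have hrle : ∀ j, r j ≤ 1 / (1 + c) :=
    fun j => ciSup_le fun k => (Sseq_bound hc hQ k j).2
  have hMlt : 1 / (1 + c) < 1 := by
    rw [div_lt_one (by linarith)]; linarith
  have hrlt1 : ∀ j, r j < 1 := fun j => lt_of_le_of_lt (hrle j) hMlt
  have hrpos : ∀ j, 0 < r j := by
    intro j
    have h1 : Sseq Q 1 j ≤ r j := le_ciSup (hbdd j) 1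
    have hpos : (0 : ℝ) < Sseq Q 1 j := by
      have hQj := hQ j
      show (0:ℝ) < 1 / (2 + Q j - Sseq Q 0 (j + 1))
      have h0 : Sseq Q 0 (j + 1) = 0 := rfl
      rw [h0, sub_zero]
      have h2 : (0:ℝ) < 2 + Q j := by linarith
      exact one_div_pos.mpr h2
    linarith
  -- the ratio recursion
  have hrrec : ∀ j, r j * (2 + Q j - r (j + 1)) = 1 := by
    intro j
    have hM : 1 / (1 + c) ≤ 1 := by rw [div_le_one (by linarith)]; linarith
    have hden : 1 + c ≤ 2 + Q j - r (j + 1) := by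
      have := hrle (j + 1); have := hQ j
      linarith
    have hden0 : (0 : ℝ) < 2 + Q j - r (j + 1) := by linarith
    have h2 : Filter.Tendsto (fun k => (2 + Q j - Sseq Q k (j + 1)))
        Filter.atTop (nhds (2 + Q j - r (j + 1))) :=
      Filter.Tendsto.sub tendsto_const_nhds (hrt (j + 1))
    have h3 := h2.inv₀ (ne_of_gt hden0)
    have hlim1 : Filter.Tendsto (fun k => Sseq Q (k + 1) j) Filter.atTop
        (nhds ((2 + Q j - r (j + 1))⁻¹)) := by
      simpa [Sseq, one_div] using h3
    have hlim2 : Filter.Tendsto (fun k => Sseq Q (k + 1) j) Filter.atTop (nhds (r j)) :=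
      (hrt j).comp (Filter.tendsto_add_atTop_nat 1)
    have heq : r j = (2 + Q j - r (j + 1))⁻¹ := tendsto_nhds_unique hlim2 hlim1
    rw [heq]
    exact inv_mul_cancel₀ (ne_of_gt hden0)
  -- the decaying solution
  set p : ℕ → ℝ := pseq r with hpdef
  have hp0 : p 0 = 1 / (1 - r 0) := rfl
  have hpS : ∀ j, p (j + 1) = r j * p j := fun j => rfl
  have hppos : ∀ j, 0 < p j := by
    intro j
    induction j with
    | zero =>
      rw [hp0]
      have := hrlt1 0
      have h : (0:ℝ) < 1 - r 0 := by linarith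
      positivity
    | succ j ih =>
      rw [hpS]
      exact mul_pos (hrpos j) ih
  have hpdec : ∀ j, p (j + 1) ≤ p j := by
    intro j
    rw [hpS]
    nlinarith [hrlt1 j, hppos j, hrpos j]
  have hprec : ∀ j : ℕ, p (j + 2) = (2 + q ((j : ℤ) + 2)) * p (j + 1) - p j := by
    intro j
    have h : r j * (2 + q ((j : ℤ) + 2) - r (j + 1)) = 1 := hrrec j
    have h2 : p (j + 2) = r (j + 1) * (r j * p j) := by rw [hpS, hpS]
    have h1 : p (j + 1) = r j * p j := hpS j
    rw [h2, h1]
    linear_combination (-(p j)) * h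
  have hp01 : p 0 - p 1 = 1 := by
    have h0 : (1 - r 0) ≠ 0 := by have := hrlt1 0; intro h; nlinarith
    rw [hpS, hp0]
    field_simp
  have hcos : 0 < Real.cos δ := by
    apply Real.cos_pos_of_mem_Ioo
    constructor
    · have := Real.pi_pos; linarith [hδ.1]
    · exact hδ.2
  have hre : (((p 1 : ℝ) : ℂ) * Complex.exp (-(δ : ℂ) * Complex.I)).re
      = p 1 * Real.cos δ := by
    have h1 : (-(δ : ℂ)) = ((-δ : ℝ) : ℂ) := by push_cast; ring
    rw [h1, Complex.re_ofReal_mul, Complex.exp_ofReal_mul_I_re, Real.cos_neg]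
  refine ⟨((p 1 : ℝ) : ℂ), by rw [hre]; exact mul_pos (hppos 1) hcos,
    fun n => φ n + (p 1 : ℂ) * θ n, fun n => rfl, ?_⟩
  -- values of ψ
  set ψ : ℤ → ℂ := fun n => φ n + (p 1 : ℂ) * θ n with hψdef
  have hφ2 : φ 2 = 0 := by linear_combination hφ1' + hφ1
  have hθ2 : θ 2 = 1 := by linear_combination hθ1' + hθ1
  have key : ∀ j : ℕ, ψ ((j : ℤ) + 1) = ((p j : ℝ) : ℂ) ∧
      ψ ((j : ℤ) + 2) = ((p (j + 1) : ℝ) : ℂ) := by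
    intro j
    induction j with
    | zero =>
      constructor
      · have h1 : (((0:ℕ) : ℤ)) + 1 = 1 := by norm_num
        rw [h1]
        show φ 1 + (p 1 : ℂ) * θ 1 = ((p 0 : ℝ) : ℂ)
        rw [hφ1, hθ1, mul_one]
        have h : (1:ℝ) + p 1 = p 0 := by linarith [hp01]
        exact_mod_cast congrArg Complex.ofReal h
      · have h1 : (((0:ℕ) : ℤ)) + 2 = 2 := by norm_num
        rw [h1]
        show φ 2 + (p 1 : ℂ) * θ 2 = ((p (0 + 1) : ℝ) : ℂ)
        rw [hφ2, hθ2, mul_one, zero_add]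
    | succ j ih =>
      have hcast1 : ((j + 1 : ℕ) : ℤ) + 1 = (j : ℤ) + 2 := by push_cast; ring
      have hcast2 : ((j + 1 : ℕ) : ℤ) + 2 = ((j : ℤ) + 2) + 1 := by push_cast; ring
      refine ⟨by rw [hcast1]; exact ih.2, ?_⟩
      rw [hcast2]
      have hidx : (p (j + 1 + 1) : ℂ) = (p (j + 2) : ℂ) := rfl
      rw [hidx]
      have hn0 : ((j : ℤ) + 2) ≠ 0 := by omega
      have hn1 : ((j : ℤ) + 2) ≠ 1 := by omega
      have eφ := hφ.1 ((j : ℤ) + 2) hn0 hn1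
      have eθ := hθ.1 ((j : ℤ) + 2) hn0 hn1
      have hm1 : ((j : ℤ) + 2) - 1 = (j : ℤ) + 1 := by ring
      rw [hm1] at eφ eθ
      have hpc : ((p (j + 2) : ℝ) : ℂ)
          = (2 + ((q ((j : ℤ) + 2) : ℝ) : ℂ)) * ((p (j + 1) : ℝ) : ℂ) - ((p j : ℝ) : ℂ) := by
        exact_mod_cast congrArg (Complex.ofReal) (hprec j)
      have ih1' : φ ((j : ℤ) + 1) + (p 1 : ℂ) * θ ((j : ℤ) + 1) = ((p j : ℝ) : ℂ) := ih.1
      have ih2' : φ ((j : ℤ) + 2) + (p 1 : ℂ) * θ ((j : ℤ) + 2) = ((p (j+1) : ℝ) : ℂ) := ih.2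
      show φ (((j : ℤ) + 2) + 1) + (p 1 : ℂ) * θ (((j : ℤ) + 2) + 1) = ((p (j + 2) : ℝ) : ℂ)
      linear_combination (-1 : ℂ) * eφ - ((p 1 : ℝ) : ℂ) * eθ
        + (2 + ((q ((j : ℤ) + 2) : ℝ) : ℂ)) * ih2' - ih1' - hpc
  -- the summand as a real sequence
  set f : {m : ℤ // 2 ≤ m} → ℝ := fun n =>
    ‖ψ ((n : ℤ) + 1) - ψ (n : ℤ)‖ ^ 2 + q (n : ℤ) * ‖ψ (n : ℤ)‖ ^ 2 with hfdef
  set g : ℕ → ℝ := fun j => f (eNat j) with hgdef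
  have hψ1 : ∀ j : ℕ, ψ ((j : ℤ) + 1) = ((p j : ℝ) : ℂ) := fun j => (key j).1
  have hg : ∀ j : ℕ, g j = (p (j + 2) - p (j + 1)) ^ 2 + q ((j : ℤ) + 2) * (p (j + 1)) ^ 2 := by
    intro j
    have h1 : ψ ((j : ℤ) + 2) = ((p (j + 1) : ℝ) : ℂ) := (key j).2
    have h2 : ψ (((j : ℤ) + 2) + 1) = ((p (j + 2) : ℝ) : ℂ) := by
      have h := hψ1 (j + 2)
      have hcast : ((j + 2 : ℕ) : ℤ) + 1 = ((j : ℤ) + 2) + 1 := by push_cast; ring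
      rw [hcast] at h
      exact h
    show ‖ψ (((j : ℤ) + 2) + 1) - ψ ((j : ℤ) + 2)‖ ^ 2
        + q ((j : ℤ) + 2) * ‖ψ ((j : ℤ) + 2)‖ ^ 2 = _
    rw [h1, h2, ← Complex.ofReal_sub, Complex.norm_real, Complex.norm_real,
      Real.norm_eq_abs, Real.norm_eq_abs, sq_abs, sq_abs]
  -- telescoping
  set B : ℕ → ℝ := fun j => p (j + 1) * (p (j + 1) - p j) with hBdef
  have hBtel : ∀ j : ℕ, g j = B (j + 1) - B j := by
    intro j
    rw [hg j]
    have h := hprec j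
    show _ = p (j + 1 + 1) * (p (j + 1 + 1) - p (j + 1)) - p (j + 1) * (p (j + 1) - p j)
    have hidx : p (j + 1 + 1) = p (j + 2) := rfl
    rw [hidx]
    linear_combination (-(p (j + 1))) * h
  have hBnonpos : ∀ j : ℕ, B j ≤ 0 := by
    intro j
    show p (j + 1) * (p (j + 1) - p j) ≤ 0
    have h1 := hpdec j
    have h2 := hppos (j + 1)
    nlinarith
  have hB0 : B 0 = -(p 1) := by
    show p 1 * (p 1 - p 0) = -(p 1)
    linear_combination (-(p 1)) * hp01
  have hsum : ∀ J : ℕ, ∑ j ∈ Finset.range J, g j ≤ p 1 := by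
    intro J
    have h : ∑ j ∈ Finset.range J, g j = B J - B 0 := by
      rw [← Finset.sum_range_sub B J]
      exact Finset.sum_congr rfl fun j _ => hBtel j
    rw [h, hB0]
    have := hBnonpos J
    linarith
  have hgnonneg : ∀ j : ℕ, 0 ≤ g j := by
    intro j
    rw [hg j]
    have h1 : c ≤ q ((j : ℤ) + 2) := hQ j
    have h2 : (0:ℝ) ≤ q ((j : ℤ) + 2) := le_trans hc.le h1
    positivity
  have hgsummable : Summable g := summable_of_sum_range_le hgnonneg hsum
  have hfsummable : Summable f := (Equiv.summable_iff eNat).mp hgsummable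
  refine ⟨hfsummable, ?_⟩
  have htsum : ∑' m, f m ≤ p 1 := by
    rw [← Equiv.tsum_eq eNat f]
    exact hgsummable.tsum_le_of_sum_range_le hsum
  rw [hre]
  have hfinal : Real.cos δ * (∑' m, f m) ≤ p 1 * Real.cos δ := by
    calc Real.cos δ * (∑' m, f m) ≤ Real.cos δ * p 1 :=
          mul_le_mul_of_nonneg_left htsum hcos.le
      _ = p 1 * Real.cos δ := by ring
  exact hfinal
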